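/- Let F ⊂ ex_n C be closed under isomorphism and extensions in mod C. Then Pb(F) is also closed under extensions in mod C, where Pb(F) is the subcategory of all F ∈ F such that for every morphism α : G → F of C-modules with G ∈ mod C, both Im α and F/Im α lie in F. -/

import Mathlib

open CategoryTheory CategoryTheory.Limits

universe v u

set_option synthInstance.maxHeartbeats 400000
set_option maxHeartbeats 800000

/-!
STATEMENT 15: if 𝓕 ⊆ ex_n C is closed under isomorphism and under extensions in
mod C, then Pb(𝓕) is also closed under extensions in mod C.
-/

/-- `F` belongs to `mod C`: it admits a pointwise exact resolution by representable
functors. -/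
def FinitelyResolved {C : Type u} [Category.{v} C] [Preadditive C]
    (F : Cᵒᵖ ⥤ AddCommGrpCat.{v}) : Prop :=
  ∃ (X : ℕ → C)
    (d : ∀ i, preadditiveYoneda.obj (X (i + 1)) ⟶ preadditiveYoneda.obj (X i))
    (ε : preadditiveYoneda.obj (X 0) ⟶ F),
    (∀ c : Cᵒᵖ, Function.Surjective ⇑(ε.app c)) ∧
    (∀ c : Cᵒᵖ, Function.Exact ⇑((d 0).app c) ⇑(ε.app c)) ∧
    (∀ i (c : Cᵒᵖ), Function.Exact ⇑((d (i + 1)).app c) ⇑((d i).app c))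

/-- `F` admits a projective resolution in `mod C` of length at most `m`
(its `m`-th differential vanishing). -/
def HasResLen {C : Type u} [Category.{v} C] [Preadditive C]
    (F : Cᵒᵖ ⥤ AddCommGrpCat.{v}) (m : ℕ) : Prop :=
  ∃ (X : ℕ → C)
    (d : ∀ i, preadditiveYoneda.obj (X (i + 1)) ⟶ preadditiveYoneda.obj (X i))
    (ε : preadditiveYoneda.obj (X 0) ⟶ F),
    (∀ c : Cᵒᵖ, Function.Surjective ⇑(ε.app c)) ∧
    (∀ c : Cᵒᵖ, Function.Exact ⇑((d 0).app c) ⇑(ε.app c)) ∧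
    (∀ i (c : Cᵒᵖ), Function.Exact ⇑((d (i + 1)).app c) ⇑((d i).app c)) ∧
    d m = 0

/-- Vanishing of `Ext^i_{mod C}(F, Hom_C(−, Y))`, computed via (all) projective
resolutions of `F` by representable functors. -/
def ExtVanish {C : Type u} [Category.{v} C] [Preadditive C]
    (F : Cᵒᵖ ⥤ AddCommGrpCat.{v}) (Y : C) : ℕ → Prop
  | 0 => ∀ φ : F ⟶ preadditiveYoneda.obj Y, φ = 0
  | (j + 1) =>
    ∀ (K : ℕ → C)
      (δ : ∀ m, preadditiveYoneda.obj (K (m + 1)) ⟶ preadditiveYoneda.obj (K m))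
      (ε : preadditiveYoneda.obj (K 0) ⟶ F),
      (∀ c : Cᵒᵖ, Function.Surjective ⇑(ε.app c)) →
      (∀ c : Cᵒᵖ, Function.Exact ⇑((δ 0).app c) ⇑(ε.app c)) →
      (∀ m (c : Cᵒᵖ), Function.Exact ⇑((δ (m + 1)).app c) ⇑((δ m).app c)) →
      Function.Exact
        (fun g : preadditiveYoneda.obj (K j) ⟶ preadditiveYoneda.obj Y => δ j ≫ g)
        (fun g : preadditiveYoneda.obj (K (j + 1)) ⟶ preadditiveYoneda.obj Y =>
          δ (j + 1) ≫ g)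

/-- `F ∈ ex_n C`: `F ∈ mod C`, `pdim F ≤ n+1`, and `Ext^i(F, Hom_C(−,Y)) = 0` for
`0 ≤ i ≤ n` and all `Y ∈ C`. -/
def MemExN {C : Type u} [Category.{v} C] [Preadditive C] (n : ℕ)
    (F : Cᵒᵖ ⥤ AddCommGrpCat.{v}) : Prop :=
  FinitelyResolved F ∧ HasResLen F (n + 1) ∧ ∀ (Y : C) i, i ≤ n → ExtVanish F Y i

/-- The operator `Pb` on classes of C-modules: `F ∈ Pb(𝓕)` iff `F ∈ 𝓕` and for
every `α : G ⟶ F` with `G ∈ mod C` both `Im α` and `F/Im α = Cok α` lie in `𝓕`. -/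
noncomputable def PbOp {C : Type u} [Category.{v} C] [Preadditive C]
    (𝓕 : Set (Cᵒᵖ ⥤ AddCommGrpCat.{v})) : Set (Cᵒᵖ ⥤ AddCommGrpCat.{v}) :=
  {F | F ∈ 𝓕 ∧ ∀ (G : Cᵒᵖ ⥤ AddCommGrpCat.{v}) (α : G ⟶ F), FinitelyResolved G →
    Limits.image α ∈ 𝓕 ∧ cokernel α ∈ 𝓕}

/-- `𝓕` is closed under extensions (for pointwise exact sequences of C-modules). -/
def ExtClosed {C : Type u} [Category.{v} C] [Preadditive C]
    (𝓕 : Set (Cᵒᵖ ⥤ AddCommGrpCat.{v})) : Prop :=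
  ∀ ⦃F G H : Cᵒᵖ ⥤ AddCommGrpCat.{v}⦄ (α : F ⟶ G) (β : G ⟶ H),
    (∀ c : Cᵒᵖ, Function.Injective ⇑(α.app c)) →
    (∀ c : Cᵒᵖ, Function.Exact ⇑(α.app c) ⇑(β.app c)) →
    (∀ c : Cᵒᵖ, Function.Surjective ⇑(β.app c)) →
    F ∈ 𝓕 → H ∈ 𝓕 → G ∈ 𝓕

/-- `𝓕` is closed under isomorphism. -/
def IsoClosedSet {C : Type u} [Category.{v} C] [Preadditive C]
    (𝓕 : Set (Cᵒᵖ ⥤ AddCommGrpCat.{v})) : Prop :=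
  ∀ F G : Cᵒᵖ ⥤ AddCommGrpCat.{v}, F ∈ 𝓕 → Nonempty (F ≅ G) → G ∈ 𝓕


open CategoryTheory.Preadditive Opposite

set_option linter.unusedSectionVars false

section Helpers

variable {C : Type u} [Category.{v} C] [Preadditive C]

lemma elt_nat {N N' : Cᵒᵖ ⥤ AddCommGrpCat.{v}} (σ : N ⟶ N') {c c' : Cᵒᵖ} (φ : c ⟶ c')
    (x : N.obj c) : σ.app c' (N.map φ x) = N'.map φ (σ.app c x) := by
  have := σ.naturality φ
  exact congrFun (congrArg (fun (h : N.obj c ⟶ N'.obj c') => ⇑h) this) x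

lemma yelt {X : C} {N : Cᵒᵖ ⥤ AddCommGrpCat.{v}} (σ : preadditiveYoneda.obj X ⟶ N) {c : Cᵒᵖ}
    (φ : c.unop ⟶ X) : σ.app c φ = N.map φ.op (σ.app (op X) (𝟙 X)) := by
  have h := (elt_nat σ φ.op (𝟙 X)).symm
  have e : ((preadditiveYoneda.obj X).map φ.op) (𝟙 X) = φ := Category.comp_id φ
  rw [e] at h
  exact h.symm

lemma yext {X : C} {N : Cᵒᵖ ⥤ AddCommGrpCat.{v}} (σ τ : preadditiveYoneda.obj X ⟶ N)
    (h : σ.app (op X) (𝟙 X) = τ.app (op X) (𝟙 X)) : σ = τ := by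
  ext c φ
  rw [yelt σ φ, yelt τ φ, h]

lemma ymap_app {X W : C} (g : X ⟶ W) {c : Cᵒᵖ} (φ : c.unop ⟶ X) :
    ((preadditiveYoneda.map g).app c) φ = φ ≫ g := rfl

/-- lift through a pointwise surjection -/
lemma liftSurj {X W : C} {N : Cᵒᵖ ⥤ AddCommGrpCat.{v}} (μ : preadditiveYoneda.obj W ⟶ N)
    (hμ : ∀ c, Function.Surjective ⇑(μ.app c)) (τ : preadditiveYoneda.obj X ⟶ N) :
    ∃ g : X ⟶ W, preadditiveYoneda.map g ≫ μ = τ := by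
  obtain ⟨g, hg⟩ := hμ (op X) (τ.app (op X) (𝟙 X))
  refine ⟨g, yext _ _ ?_⟩
  show μ.app (op X) ((preadditiveYoneda.map g).app (op X) (𝟙 X)) = _
  erw [ymap_app, Category.id_comp]; exact hg

/-- lift through pointwise exactness -/
lemma liftExact {X W' W : C} {N : Cᵒᵖ ⥤ AddCommGrpCat.{v}}
    (d : preadditiveYoneda.obj W' ⟶ preadditiveYoneda.obj W)
    (χ : preadditiveYoneda.obj W ⟶ N) (hex : ∀ c, Function.Exact ⇑(d.app c) ⇑(χ.app c))
    (τ : preadditiveYoneda.obj X ⟶ preadditiveYoneda.obj W) (hτ : τ ≫ χ = 0) :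
    ∃ g : X ⟶ W', preadditiveYoneda.map g ≫ d = τ := by
  have h0 : χ.app (op X) (τ.app (op X) (𝟙 X)) = 0 := by
    have := congrArg (fun (s : preadditiveYoneda.obj X ⟶ N) => s.app (op X) (𝟙 X)) hτ
    exact this
  obtain ⟨g, hg⟩ := ((hex (op X)) (τ.app (op X) (𝟙 X))).1 h0
  refine ⟨g, yext _ _ ?_⟩
  show d.app (op X) ((preadditiveYoneda.map g).app (op X) (𝟙 X)) = _
  erw [ymap_app, Category.id_comp]; exact hg

/-- corestrict a map through a pointwise-injective map whose range contains it -/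
lemma corestrict {T F G : Cᵒᵖ ⥤ AddCommGrpCat.{v}} (t : T ⟶ G) (ι : F ⟶ G)
    (hι : ∀ c, Function.Injective ⇑(ι.app c))
    (h : ∀ c x, t.app c x ∈ Set.range ⇑(ι.app c)) :
    ∃ κ : T ⟶ F, κ ≫ ι = t := by
  classical
  have hchoose : ∀ c (x : T.obj c), ι.app c ((h c x).choose) = t.app c x :=
    fun c x => (h c x).choose_spec
  refine ⟨{ app := fun c => AddCommGrpCat.ofHom (AddMonoidHom.mk' (fun x => (h c x).choose) ?_), naturality := ?_ }, ?_⟩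
  · intro a b
    apply hι c
    rw [hchoose, map_add, map_add, hchoose, hchoose]
  · intro c c' φ
    ext x
    apply hι c'
    show ι.app c' ((h c' (T.map φ x)).choose) = ι.app c' (F.map φ ((h c x).choose))
    rw [hchoose, elt_nat ι φ, hchoose, elt_nat t φ]
  · ext c x
    exact hchoose c x

lemma comp_eq_zero_of_ptexact {F G H : Cᵒᵖ ⥤ AddCommGrpCat.{v}} (f : F ⟶ G) (g : G ⟶ H)
    (hex : ∀ c, Function.Exact ⇑(f.app c) ⇑(g.app c)) : f ≫ g = 0 := by
  ext c x
  exact (hex c).apply_apply_eq_zero x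

open Classical in
/-- chain lift of `e : A ⟶ M` along resolutions -/
noncomputable def chainLift {A M : Cᵒᵖ ⥤ AddCommGrpCat.{v}} (XP XQ : ℕ → C)
    (dP : ∀ i, preadditiveYoneda.obj (XP (i+1)) ⟶ preadditiveYoneda.obj (XP i))
    (dQ : ∀ i, preadditiveYoneda.obj (XQ (i+1)) ⟶ preadditiveYoneda.obj (XQ i))
    (εP : preadditiveYoneda.obj (XP 0) ⟶ A) (εQ : preadditiveYoneda.obj (XQ 0) ⟶ M)
    (e : A ⟶ M) : ∀ i, XP i ⟶ XQ i
  | 0 => if h : ∃ g : XP 0 ⟶ XQ 0, preadditiveYoneda.map g ≫ εQ = εP ≫ e then h.choose else 0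
  | (i+1) => if h : ∃ g : XP (i+1) ⟶ XQ (i+1), preadditiveYoneda.map g ≫ dQ i =
      dP i ≫ preadditiveYoneda.map (chainLift XP XQ dP dQ εP εQ e i) then h.choose else 0

section KernelLemma

variable [HasBinaryBiproducts C] [IsIdempotentComplete C]

lemma kernelFinitelyResolved {A M K : Cᵒᵖ ⥤ AddCommGrpCat.{v}}
    (hA : FinitelyResolved A) (hM : FinitelyResolved M)
    (e : A ⟶ M) (he : ∀ c, Function.Surjective ⇑(e.app c))
    (k : K ⟶ A) (hk1 : ∀ c, Function.Injective ⇑(k.app c))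
    (hk2 : ∀ c, Function.Exact ⇑(k.app c) ⇑(e.app c)) :
    FinitelyResolved K := by
  classical
  obtain ⟨XP, dP, εP, hεP, hP0, hPS⟩ := hA
  obtain ⟨XQ, dQ, εQ, hεQ, hQ0, hQS⟩ := hM
  -- C-level differentials
  set p : ∀ i, XP (i+1) ⟶ XP i := fun i => preadditiveYoneda.preimage (dP i) with hpdef
  set q : ∀ i, XQ (i+1) ⟶ XQ i := fun i => preadditiveYoneda.preimage (dQ i) with hqdef
  have hp : ∀ i, preadditiveYoneda.map (p i) = dP i := fun i => preadditiveYoneda.map_preimage _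
  have hq : ∀ i, preadditiveYoneda.map (q i) = dQ i := fun i => preadditiveYoneda.map_preimage _
  -- chain lift
  set f : ∀ i, XP i ⟶ XQ i := chainLift XP XQ dP dQ εP εQ e with hfdef
  have hcl0 : f 0 = if h : ∃ g : XP 0 ⟶ XQ 0, preadditiveYoneda.map g ≫ εQ = εP ≫ e
      then h.choose else 0 := by rw [hfdef, chainLift]
  have hclS : ∀ i, f (i+1) = if h : ∃ g : XP (i+1) ⟶ XQ (i+1),
      preadditiveYoneda.map g ≫ dQ i = dP i ≫ preadditiveYoneda.map (f i)
      then h.choose else 0 := by intro i; conv_lhs => rw [hfdef, chainLift]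
  have hcf0 : preadditiveYoneda.map (f 0) ≫ εQ = εP ≫ e := by
    have hex := liftSurj εQ hεQ (εP ≫ e)
    rw [hcl0, dif_pos hex]
    exact hex.choose_spec
  have hdPεP : dP 0 ≫ εP = 0 := comp_eq_zero_of_ptexact _ _ hP0
  have hdPdP : ∀ i, dP (i+1) ≫ dP i = 0 := fun i => comp_eq_zero_of_ptexact _ _ (hPS i)
  have hdQdQ : ∀ i, dQ (i+1) ≫ dQ i = 0 := fun i => comp_eq_zero_of_ptexact _ _ (hQS i)
  have hcfS : ∀ i, preadditiveYoneda.map (f (i+1)) ≫ dQ i = dP i ≫ preadditiveYoneda.map (f i) := by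
    intro i
    induction i with
    | zero =>
      have hτ : (dP 0 ≫ preadditiveYoneda.map (f 0)) ≫ εQ = 0 := by
        rw [Category.assoc, hcf0, ← Category.assoc, hdPεP, zero_comp]
      have hex := liftExact (dQ 0) εQ hQ0 (dP 0 ≫ preadditiveYoneda.map (f 0)) hτ
      rw [hclS 0, dif_pos hex]
      exact hex.choose_spec
    | succ i ih =>
      have hτ : (dP (i+1) ≫ preadditiveYoneda.map (f (i+1))) ≫ dQ i = 0 := by
        rw [Category.assoc, ih, ← Category.assoc, hdPdP, zero_comp]
      have hex := liftExact (dQ (i+1)) (dQ i) (hQS i)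
        (dP (i+1) ≫ preadditiveYoneda.map (f (i+1))) hτ
      rw [hclS (i+1), dif_pos hex]
      exact hex.choose_spec
  -- C-level identities
  have hpp : ∀ i, p (i+1) ≫ p i = 0 := by
    intro i
    apply preadditiveYoneda.map_injective
    rw [Functor.map_comp, hp, hp, hdPdP]
    ext c x; simp
  have hqq : ∀ i, q (i+1) ≫ q i = 0 := by
    intro i
    apply preadditiveYoneda.map_injective
    rw [Functor.map_comp, hq, hq, hdQdQ]
    ext c x; simp
  have hfS : ∀ i, f (i+1) ≫ q i = p i ≫ f i := by
    intro i
    apply preadditiveYoneda.map_injective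
    rw [Functor.map_comp, Functor.map_comp, hp, hq, hcfS]
  -- pointwise exactness, elementwise form
  have hP0' : ∀ (c : Cᵒᵖ) (w : c.unop ⟶ XP 0), εP.app c w = 0 →
      ∃ u : c.unop ⟶ XP 1, u ≫ p 0 = w := by
    intro c w hw
    obtain ⟨u, hu⟩ := (hP0 c w).mp hw
    refine ⟨u, ?_⟩
    rw [← hp 0] at hu
    exact hu
  have hPS' : ∀ i (c : Cᵒᵖ) (w : c.unop ⟶ XP (i+1)), w ≫ p i = 0 →
      ∃ u : c.unop ⟶ XP (i+2), u ≫ p (i+1) = w := by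
    intro i c w hw
    have hw' : (dP i).app c w = 0 := by rw [← hp i]; exact hw
    obtain ⟨u, hu⟩ := (hPS i c w).mp hw'
    refine ⟨u, ?_⟩
    rw [← hp (i+1)] at hu
    exact hu
  have hQ0' : ∀ (c : Cᵒᵖ) (w : c.unop ⟶ XQ 0), εQ.app c w = 0 →
      ∃ u : c.unop ⟶ XQ 1, u ≫ q 0 = w := by
    intro c w hw
    obtain ⟨u, hu⟩ := (hQ0 c w).mp hw
    refine ⟨u, ?_⟩
    rw [← hq 0] at hu
    exact hu
  have hQS' : ∀ i (c : Cᵒᵖ) (w : c.unop ⟶ XQ (i+1)), w ≫ q i = 0 →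
      ∃ u : c.unop ⟶ XQ (i+2), u ≫ q (i+1) = w := by
    intro i c w hw
    have hw' : (dQ i).app c w = 0 := by rw [← hq i]; exact hw
    obtain ⟨u, hu⟩ := (hQS i c w).mp hw'
    refine ⟨u, ?_⟩
    rw [← hq (i+1)] at hu
    exact hu
  have hεp : ∀ (c : Cᵒᵖ) (w : c.unop ⟶ XP 1), εP.app c (w ≫ p 0) = 0 := by
    intro c w
    have := (hP0 c).apply_apply_eq_zero w
    rw [← hp 0] at this
    simpa [ymap_app] using this
  have hεq : ∀ (c : Cᵒᵖ) (w : c.unop ⟶ XQ 1), εQ.app c (w ≫ q 0) = 0 := by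
    intro c w
    have := (hQ0 c).apply_apply_eq_zero w
    rw [← hq 0] at this
    simpa [ymap_app] using this
  have hf0' : ∀ (c : Cᵒᵖ) (w : c.unop ⟶ XP 0), εQ.app c (w ≫ f 0) = e.app c (εP.app c w) := by
    intro c w
    have := congrArg (fun s : preadditiveYoneda.obj (XP 0) ⟶ M => s.app c w) hcf0
    exact this
  -- the cone
  have hdesc : ∀ {W V V' : C} (uu : V ⟶ W) (vv : V' ⟶ W),
      (biprod.desc uu vv : V ⊞ V' ⟶ W) = biprod.fst ≫ uu + biprod.snd ≫ vv := by
    intro W V V' uu vv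
    apply biprod.hom_ext' <;> simp
  set δ0 : (XP 0 ⊞ XQ 1) ⟶ XQ 0 := biprod.desc (f 0) (q 0) with hδ0def
  set D : ∀ (kk : ℕ), (XP (kk+1) ⊞ XQ (kk+2)) ⟶ (XP kk ⊞ XQ (kk+1)) := fun kk =>
    biprod.lift (-(biprod.fst ≫ p kk)) (biprod.fst ≫ f (kk+1) + biprod.snd ≫ q (kk+1)) with hDdef
  have hDfst : ∀ kk, D kk ≫ biprod.fst = -(biprod.fst ≫ p kk) := by
    intro kk; rw [hDdef]; simp
  have hDsnd : ∀ kk, D kk ≫ biprod.snd = biprod.fst ≫ f (kk+1) + biprod.snd ≫ q (kk+1) := by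
    intro kk; rw [hDdef]; simp
  have hD0δ0 : D 0 ≫ δ0 = 0 := by
    rw [hδ0def, hDdef]
    simp only [biprod.lift_desc, neg_comp, add_comp, Category.assoc, hfS, hqq,
      comp_zero, add_zero]
    exact neg_add_cancel _
  have hDD : ∀ kk, D (kk+1) ≫ D kk = 0 := by
    intro kk
    apply biprod.hom_ext
    · simp only [Category.assoc, hDfst, zero_comp, comp_neg, neg_comp, neg_neg]
      rw [← Category.assoc, hDfst]
      simp only [neg_comp, neg_neg, Category.assoc, hpp, comp_zero, neg_zero]
    · simp only [Category.assoc, hDsnd, zero_comp, comp_add]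
      rw [← Category.assoc, hDfst, ← Category.assoc, hDsnd]
      simp only [neg_comp, add_comp, Category.assoc, hfS, hqq, comp_zero, add_zero]
      exact neg_add_cancel _
  -- split the degree 0 differential
  have hδ0surj : ∀ (c : Cᵒᵖ) (y : c.unop ⟶ XQ 0), ∃ z : c.unop ⟶ XP 0 ⊞ XQ 1, z ≫ δ0 = y := by
    intro c y
    obtain ⟨ay, hay⟩ := he c (εQ.app c y)
    obtain ⟨a, ha⟩ := hεP c ay
    have h1 : εQ.app c (y - a ≫ f 0) = 0 := by
      erw [map_sub, hf0', ha, hay, sub_self]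
    obtain ⟨v, hv⟩ := hQ0' c _ h1
    refine ⟨biprod.lift a v, ?_⟩
    erw [hδ0def, biprod.lift_desc, hv]
    abel
  obtain ⟨s, hs⟩ := liftSurj (preadditiveYoneda.map δ0) (fun c y => hδ0surj c y)
    (𝟙 (preadditiveYoneda.obj (XQ 0)))
  have hsδ0 : s ≫ δ0 = 𝟙 (XQ 0) := by
    apply preadditiveYoneda.map_injective
    rw [CategoryTheory.Functor.map_comp, CategoryTheory.Functor.map_id, hs]
  set uu : (XP 0 ⊞ XQ 1) ⟶ (XP 0 ⊞ XQ 1) := 𝟙 _ - δ0 ≫ s with huudef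
  have huu : uu ≫ uu = uu := by
    rw [huudef, comp_sub, sub_comp, sub_comp, Category.id_comp, Category.comp_id,
      Category.assoc, ← Category.assoc s, hsδ0, Category.id_comp, Category.id_comp]
    abel
  obtain ⟨R, ii, ρ, hiρ, hρi⟩ := IsIdempotentComplete.idempotents_split _ uu huu
  have hiu : ii ≫ uu = ii := by
    rw [← hρi, ← Category.assoc, hiρ, Category.id_comp]
  have hcycu : ∀ {V : C} (z : V ⟶ XP 0 ⊞ XQ 1), z ≫ δ0 = 0 → z ≫ uu = z := by
    intro V z hz
    rw [huudef, comp_sub, Category.comp_id, ← Category.assoc, hz, zero_comp, sub_zero]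
  have huδ0 : uu ≫ δ0 = 0 := by
    rw [huudef, sub_comp, Category.id_comp, Category.assoc, hsδ0, Category.comp_id, sub_self]
  have hiδ0 : ii ≫ δ0 = 0 := by rw [← hiu, Category.assoc, huδ0, comp_zero]
  have hD0u : D 0 ≫ uu = D 0 := hcycu _ hD0δ0
  -- the augmentation of the new resolution
  set tt : preadditiveYoneda.obj R ⟶ A := preadditiveYoneda.map (ii ≫ biprod.fst) ≫ εP
    with httdef
  have httapp : ∀ (c : Cᵒᵖ) (r : c.unop ⟶ R), tt.app c r = εP.app c (r ≫ (ii ≫ biprod.fst)) := by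
    intro c r
    rw [httdef]
    rfl
  have hrange : ∀ (c : Cᵒᵖ) (r : c.unop ⟶ R), tt.app c r ∈ Set.range ⇑(k.app c) := by
    intro c r
    apply (hk2 c _).mp
    rw [httapp, ← hf0']
    have hz : (r ≫ ii) ≫ δ0 = 0 := by rw [Category.assoc, hiδ0, comp_zero]
    rw [hδ0def, hdesc, comp_add] at hz
    have hz' : (r ≫ (ii ≫ biprod.fst)) ≫ f 0 = -(((r ≫ ii) ≫ biprod.snd) ≫ q 0) := by
      have h3 := eq_neg_of_add_eq_zero_left hz
      simpa [Category.assoc] using h3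
    erw [hz', map_neg, hεq, neg_zero]
  obtain ⟨ε', hε'⟩ := corestrict tt k hk1 hrange
  have hε'app : ∀ (c : Cᵒᵖ) (r : c.unop ⟶ R),
      k.app c (ε'.app c r) = εP.app c (r ≫ (ii ≫ biprod.fst)) := by
    intro c r
    rw [← httapp]
    have h4 := congrArg (fun σ : preadditiveYoneda.obj R ⟶ A => σ.app c r) hε'
    exact h4
  -- generic cone exactness
  have coneExact : ∀ (j : ℕ) (c : Cᵒᵖ) (z : c.unop ⟶ XP (j+1) ⊞ XQ (j+2)), z ≫ D j = 0 →
      ∃ z' : c.unop ⟶ XP (j+2) ⊞ XQ (j+3), z' ≫ D (j+1) = z := by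
    intro j c z hz
    have h1 : (z ≫ biprod.fst) ≫ p j = 0 := by
      have hh := congrArg (fun g => g ≫ (biprod.fst : XP j ⊞ XQ (j+1) ⟶ XP j)) hz
      rw [Category.assoc, hDfst, comp_neg, zero_comp, neg_eq_zero, ← Category.assoc] at hh
      exact hh
    obtain ⟨w', hw'⟩ := hPS' j c _ h1
    have h2 : (z ≫ biprod.fst) ≫ f (j+1) + (z ≫ biprod.snd) ≫ q (j+1) = 0 := by
      have hh := congrArg (fun g => g ≫ (biprod.snd : XP j ⊞ XQ (j+1) ⟶ XQ (j+1))) hz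
      rw [Category.assoc, hDsnd, comp_add, zero_comp, ← Category.assoc, ← Category.assoc] at hh
      exact hh
    have hts : f (j+1+1) ≫ q (j+1) = p (j+1) ≫ f (j+1) := hfS (j+1)
    have hv1 : (z ≫ biprod.snd + w' ≫ f (j+1+1)) ≫ q (j+1) = 0 := by
      rw [add_comp, Category.assoc w' (f (j+1+1)) (q (j+1)), hts,
        ← Category.assoc w' (p (j+1)) (f (j+1)), hw']
      exact (add_comm _ _).trans h2
    obtain ⟨v'', hv''⟩ := hQS' (j+1) c _ hv1
    refine ⟨biprod.lift (-w') v'', ?_⟩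
    apply biprod.hom_ext
    · rw [Category.assoc, hDfst, comp_neg, ← Category.assoc, biprod.lift_fst, neg_comp,
        neg_neg, hw']
    · rw [Category.assoc, hDsnd, comp_add, ← Category.assoc, biprod.lift_fst,
        ← Category.assoc, biprod.lift_snd, hv'', neg_comp]
      abel
  -- assemble the resolution of K
  refine ⟨fun n => Nat.casesOn n R (fun j => XP (j+1) ⊞ XQ (j+2)),
    fun n => Nat.rec (motive := fun n => preadditiveYoneda.obj
        (Nat.casesOn (motive := fun _ => C) (n+1) R (fun j => XP (j+1) ⊞ XQ (j+2))) ⟶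
        preadditiveYoneda.obj (Nat.casesOn (motive := fun _ => C) n R (fun j => XP (j+1) ⊞ XQ (j+2))))
      (preadditiveYoneda.map (D 0 ≫ ρ)) (fun j _ => preadditiveYoneda.map (D (j+1))) n,
    ε', ?_, ?_, ?_⟩
  · -- surjectivity of ε'
    intro c x
    obtain ⟨w, hw⟩ := hεP c (k.app c x)
    change c.unop ⟶ XP 0 at w
    have h1 : εQ.app c (-(w ≫ f 0)) = 0 := by
      erw [map_neg, hf0', hw, (hk2 c).apply_apply_eq_zero x, neg_zero]
    obtain ⟨v, hv⟩ := hQ0' c _ h1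
    have hz : biprod.lift w v ≫ δ0 = 0 := by
      rw [hδ0def, biprod.lift_desc, hv]
      abel
    refine ⟨biprod.lift w v ≫ ρ, ?_⟩
    apply hk1 c
    refine (hε'app c _).trans ?_
    have h5 : (biprod.lift w v ≫ ρ) ≫ (ii ≫ biprod.fst) = biprod.lift w v ≫ biprod.fst := by
      rw [Category.assoc, ← Category.assoc ρ ii, hρi, ← Category.assoc, hcycu _ hz]
    erw [h5, biprod.lift_fst, hw]
  · -- exactness at R
    intro c r
    change c.unop ⟶ R at r
    constructor
    · intro hr
      have hr' : εP.app c (r ≫ (ii ≫ biprod.fst)) = 0 :=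
        (hε'app c r).symm.trans ((congrArg (⇑(k.app c)) hr).trans (map_zero _))
      have hzcyc : (r ≫ ii) ≫ δ0 = 0 := by rw [Category.assoc, hiδ0, comp_zero]
      have hfstz : εP.app c ((r ≫ ii) ≫ biprod.fst) = 0 := by
        rw [← Category.assoc] at hr'
        exact hr'
      obtain ⟨w', hw'⟩ := hP0' c _ hfstz
      have hcomp : ((r ≫ ii) ≫ biprod.fst) ≫ f 0 + ((r ≫ ii) ≫ biprod.snd) ≫ q 0 = 0 := by
        rw [hδ0def, hdesc, comp_add, ← Category.assoc, ← Category.assoc] at hzcyc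
        exact hzcyc
      have hv1 : ((r ≫ ii) ≫ biprod.snd + w' ≫ f (0+1)) ≫ q 0 = 0 := by
        rw [add_comp, Category.assoc w' (f (0+1)) (q 0), hfS 0,
          ← Category.assoc w' (p 0) (f 0), hw']
        exact (add_comm _ _).trans hcomp
      obtain ⟨v'', hv''⟩ := hQS' 0 c _ hv1
      refine ⟨biprod.lift (-w') v'', ?_⟩
      show biprod.lift (-w') v'' ≫ (D 0 ≫ ρ) = r
      have hlift : biprod.lift (-w') v'' ≫ D 0 = r ≫ ii := by
        apply biprod.hom_ext
        · rw [Category.assoc, hDfst, comp_neg, ← Category.assoc, biprod.lift_fst, neg_comp,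
            neg_neg, hw']
        · rw [Category.assoc, hDsnd, comp_add, ← Category.assoc, biprod.lift_fst,
            ← Category.assoc, biprod.lift_snd, hv'', neg_comp]
          abel
      calc biprod.lift (-w') v'' ≫ (D 0 ≫ ρ)
          = (biprod.lift (-w') v'' ≫ D 0) ≫ ρ := by rw [Category.assoc]
        _ = (r ≫ ii) ≫ ρ := by rw [hlift]
        _ = r := by rw [Category.assoc, hiρ]; simp
    · rintro ⟨w, rfl⟩
      change c.unop ⟶ XP (0+1) ⊞ XQ (0+2) at w
      apply hk1 c
      refine (hε'app c _).trans ?_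
      show εP.app c (((preadditiveYoneda.map (D 0 ≫ ρ)).app c w) ≫ (ii ≫ biprod.fst))
        = k.app c 0
      have h6 : ((preadditiveYoneda.map (D 0 ≫ ρ)).app c w) ≫ (ii ≫ biprod.fst)
          = -((w ≫ biprod.fst) ≫ p 0) := by
        show (w ≫ (D 0 ≫ ρ)) ≫ (ii ≫ biprod.fst) = _
        calc (w ≫ (D 0 ≫ ρ)) ≫ (ii ≫ biprod.fst)
            = w ≫ (D 0 ≫ (ρ ≫ ii)) ≫ biprod.fst := by simp only [Category.assoc]
          _ = w ≫ (D 0 ≫ uu) ≫ biprod.fst := by rw [hρi]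
          _ = w ≫ D 0 ≫ biprod.fst := by rw [hD0u]
          _ = -((w ≫ biprod.fst) ≫ p 0) := by
              rw [hDfst, comp_neg, ← Category.assoc]
      erw [h6, map_neg, hεp, neg_zero, map_zero]
  · -- exactness in higher degrees
    intro j c
    cases j with
    | zero =>
      intro z
      change c.unop ⟶ XP (0+1) ⊞ XQ (0+2) at z
      constructor
      · intro hz0
        have hz1 : z ≫ (D 0 ≫ ρ) = 0 := hz0
        have hz : z ≫ D 0 = 0 := by
          have h7 : z ≫ D 0 = (z ≫ (D 0 ≫ ρ)) ≫ ii := by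
            calc z ≫ D 0 = z ≫ (D 0 ≫ uu) := by rw [hD0u]
              _ = (z ≫ (D 0 ≫ ρ)) ≫ ii := by rw [← hρi]; simp only [Category.assoc]
          rw [h7, hz1, zero_comp]
        obtain ⟨z', hz'⟩ := coneExact 0 c z hz
        exact ⟨z', hz'⟩
      · rintro ⟨w, rfl⟩
        change c.unop ⟶ XP (1+1) ⊞ XQ (1+2) at w
        show (w ≫ D 1) ≫ (D 0 ≫ ρ) = 0
        rw [← Category.assoc, Category.assoc w (D 1) (D 0), hDD 0, comp_zero, zero_comp]
    | succ j =>
      intro z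
      constructor
      · intro hz0
        obtain ⟨z', hz'⟩ := coneExact (j+1) c z hz0
        exact ⟨z', hz'⟩
      · rintro ⟨w, rfl⟩
        change c.unop ⟶ XP (j+2+1) ⊞ XQ (j+2+2) at w
        show (w ≫ D (j+2)) ≫ D (j+1) = 0
        rw [Category.assoc, hDD (j+1), comp_zero]

end KernelLemma



section PtFacts

variable {C : Type u} [Category.{v} C] [Preadditive C]

lemma ptExact {F G H : Cᵒᵖ ⥤ AddCommGrpCat.{v}} (f : F ⟶ G) (g : G ⟶ H) (w : f ≫ g = 0)
    (hS : (ShortComplex.mk f g w).Exact) (c : Cᵒᵖ) :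
    Function.Exact ⇑(f.app c) ⇑(g.app c) := by
  have := hS.map ((evaluation Cᵒᵖ AddCommGrpCat.{v}).obj c)
  exact (ShortComplex.ab_exact_iff_function_exact _).1 this

lemma ptExact_kernel {G H : Cᵒᵖ ⥤ AddCommGrpCat.{v}} (g : G ⟶ H) (c : Cᵒᵖ) :
    Function.Exact ⇑((kernel.ι g).app c) ⇑(g.app c) :=
  ptExact _ _ (kernel.condition g)
    (ShortComplex.exact_of_f_is_kernel _ (kernelIsKernel g)) c

lemma ptExact_cokernel {G H : Cᵒᵖ ⥤ AddCommGrpCat.{v}} (g : G ⟶ H) (c : Cᵒᵖ) :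
    Function.Exact ⇑(g.app c) ⇑((cokernel.π g).app c) :=
  ptExact _ _ (cokernel.condition g)
    (ShortComplex.exact_of_g_is_cokernel _ (cokernelIsCokernel g)) c

lemma ptSurj {F G : Cᵒᵖ ⥤ AddCommGrpCat.{v}} (f : F ⟶ G) [Epi f] (c : Cᵒᵖ) :
    Function.Surjective ⇑(f.app c) :=
  (AddCommGrpCat.epi_iff_surjective _).1 ((NatTrans.epi_iff_epi_app f).1 inferInstance c)

lemma ptInj {F G : Cᵒᵖ ⥤ AddCommGrpCat.{v}} (f : F ⟶ G) [Mono f] (c : Cᵒᵖ) :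
    Function.Injective ⇑(f.app c) :=
  (AddCommGrpCat.mono_iff_injective _).1 ((NatTrans.mono_iff_mono_app f).1 inferInstance c)

end PtFacts

end Helpers

theorem stmt15 {C : Type u} [Category.{v} C] [Preadditive C]
    [HasZeroObject C] [HasBinaryBiproducts C] [IsIdempotentComplete C]
    (n : ℕ) (hn : 1 ≤ n) (𝓕 : Set (Cᵒᵖ ⥤ AddCommGrpCat.{v}))
    (hsub : ∀ F ∈ 𝓕, MemExN n F) (hiso : IsoClosedSet 𝓕) (hext : ExtClosed 𝓕) :
    ExtClosed (PbOp 𝓕) := by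
  intro F G H ι π hinj hexact hsurj hF hH
  obtain ⟨hF1, hF2⟩ := hF
  obtain ⟨hH1, hH2⟩ := hH
  refine ⟨hext ι π hinj hexact hsurj hF1 hH1, ?_⟩
  intro A α hA
  obtain ⟨hIβ, hCβ⟩ := hH2 A (α ≫ π) hA
  set β : A ⟶ H := α ≫ π with hβdef
  have hMfr : FinitelyResolved (Limits.image β) := (hsub _ hIβ).1
  set e : A ⟶ Limits.image β := factorThruImage β with hedef
  set mβ : Limits.image β ⟶ H := image.ι β with hmβdef
  have hmβinj : ∀ c, Function.Injective ⇑(mβ.app c) := fun c => ptInj _ c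
  have hesurj : ∀ c, Function.Surjective ⇑(e.app c) := fun c => ptSurj _ c
  have hfacβ : ∀ (c : Cᵒᵖ) x, mβ.app c (e.app c x) = β.app c x := by
    intro c x
    exact congrArg (fun σ : A ⟶ H => σ.app c x) (image.fac β)
  set kk : kernel β ⟶ A := kernel.ι β with hkkdef
  have hkinj : ∀ c, Function.Injective ⇑(kk.app c) := fun c => ptInj _ c
  have hkex : ∀ c, Function.Exact ⇑(kk.app c) ⇑(β.app c) := fun c => ptExact_kernel β c
  have hk2 : ∀ c, Function.Exact ⇑(kk.app c) ⇑(e.app c) := by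
    intro c y
    constructor
    · intro hy
      exact (hkex c y).mp (by rw [← hfacβ, hy, map_zero])
    · intro hy
      have h1 := (hkex c y).mpr hy
      have h2 : mβ.app c (e.app c y) = mβ.app c 0 := by rw [hfacβ, h1, map_zero]
      exact hmβinj c h2
  have hKfr : FinitelyResolved (kernel β) :=
    kernelFinitelyResolved hA hMfr e hesurj kk hkinj hk2
  have hcnd : (kk ≫ α) ≫ π = 0 := by
    rw [Category.assoc, ← hβdef, hkkdef]
    exact kernel.condition β
  have hrangeκ : ∀ (c : Cᵒᵖ) x, (kk ≫ α).app c x ∈ Set.range ⇑(ι.app c) := by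
    intro c x
    apply (hexact c _).mp
    have h0 := congrArg (fun σ : kernel β ⟶ H => σ.app c x) hcnd
    simpa using h0
  obtain ⟨κ, hκ⟩ := corestrict (kk ≫ α) ι hinj hrangeκ
  obtain ⟨hIκ, hCκ⟩ := hF2 (kernel β) κ hKfr
  have hκel : ∀ (c : Cᵒᵖ) x, ι.app c (κ.app c x) = α.app c (kk.app c x) := by
    intro c x
    have h0 := congrArg (fun σ : kernel β ⟶ G => σ.app c x) hκ
    simpa using h0
  constructor
  · -- image α ∈ 𝓕
    have hsq1w : (kk : kernel β ⟶ A) ≫ α = κ ≫ ι := hκ.symm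
    set sq1 : Arrow.mk κ ⟶ Arrow.mk α := Arrow.homMk (u := kk) (v := ι) (by simpa using hsq1w)
      with hsq1def
    set sq2 : Arrow.mk α ⟶ Arrow.mk β := Arrow.homMk (u := 𝟙 A) (v := π)
      (by simp [hβdef]) with hsq2def
    set u : Limits.image κ ⟶ Limits.image α := image.map sq1 with hudef
    set v : Limits.image α ⟶ Limits.image β := image.map sq2 with hvdef
    have hueq : ∀ (c : Cᵒᵖ) x, (image.ι α).app c (u.app c x) = ι.app c ((image.ι κ).app c x) := by
      intro c x
      have h0 := congrArg (fun σ : Limits.image κ ⟶ G => σ.app c x) (image.map_ι sq1)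
      simpa [hsq1def] using h0
    have hveq : ∀ (c : Cᵒᵖ) x, mβ.app c (v.app c x) = π.app c ((image.ι α).app c x) := by
      intro c x
      have h0 := congrArg (fun σ : Limits.image α ⟶ H => σ.app c x) (image.map_ι sq2)
      simpa [hsq2def] using h0
    have hfeq1 : ∀ (c : Cᵒᵖ) x,
        u.app c ((factorThruImage κ).app c x) = (factorThruImage α).app c (kk.app c x) := by
      intro c x
      have h0 := congrArg (fun σ : kernel β ⟶ Limits.image α => σ.app c x) (image.factor_map sq1)
      simpa [hsq1def] using h0
    have hfeq2 : ∀ (c : Cᵒᵖ) x,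
        v.app c ((factorThruImage α).app c x) = e.app c x := by
      intro c x
      have h0 := congrArg (fun σ : A ⟶ Limits.image β => σ.app c x) (image.factor_map sq2)
      simpa [hsq2def] using h0
    have hfacα : ∀ (c : Cᵒᵖ) x,
        (image.ι α).app c ((factorThruImage α).app c x) = α.app c x := by
      intro c x
      exact congrArg (fun σ : A ⟶ G => σ.app c x) (image.fac α)
    have hfacκ : ∀ (c : Cᵒᵖ) x,
        (image.ι κ).app c ((factorThruImage κ).app c x) = κ.app c x := by
      intro c x
      exact congrArg (fun σ : kernel β ⟶ F => σ.app c x) (image.fac κ)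
    refine hext u v ?_ ?_ ?_ hIκ hIβ
    · intro c a b hab
      apply ptInj (image.ι κ) c
      apply hinj c
      rw [← hueq, ← hueq, hab]
    · intro c y
      constructor
      · intro hv0
        obtain ⟨a, ha⟩ := ptSurj (factorThruImage α) c y
        have h1 : e.app c a = 0 := by
          calc e.app c a = v.app c ((factorThruImage α).app c a) := (hfeq2 c a).symm
            _ = v.app c y := by rw [ha]
            _ = 0 := hv0
        have hβ0 : β.app c a = 0 := by rw [← hfacβ, h1, map_zero]
        obtain ⟨t, ht⟩ := (hkex c a).mp hβ0
        refine ⟨(factorThruImage κ).app c t, ?_⟩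
        apply ptInj (image.ι α) c
        calc (image.ι α).app c (u.app c ((factorThruImage κ).app c t))
            = ι.app c ((image.ι κ).app c ((factorThruImage κ).app c t)) := hueq c _
          _ = ι.app c (κ.app c t) := by rw [hfacκ]
          _ = α.app c (kk.app c t) := hκel c t
          _ = α.app c a := by rw [ht]
          _ = (image.ι α).app c ((factorThruImage α).app c a) := (hfacα c a).symm
          _ = (image.ι α).app c y := by rw [ha]
      · rintro ⟨x, rfl⟩
        apply hmβinj c
        rw [map_zero, hveq, hueq]
        exact (hexact c).apply_apply_eq_zero _
    · intro c y
      obtain ⟨a, ha⟩ := hesurj c y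
      exact ⟨(factorThruImage α).app c a, by rw [hfeq2, ha]⟩
  · -- cokernel α ∈ 𝓕
    set u' : cokernel κ ⟶ cokernel α := cokernel.map κ α kk ι hκ with hu'def
    set v' : cokernel α ⟶ cokernel β := cokernel.map α β (𝟙 A) π
      (by simp [hβdef]) with hv'def
    have hu'eq : ∀ (c : Cᵒᵖ) y,
        u'.app c ((cokernel.π κ).app c y) = (cokernel.π α).app c (ι.app c y) := by
      intro c y
      have hcomm : cokernel.π κ ≫ u' = ι ≫ cokernel.π α := by
        rw [hu'def]; simp
      have h0 := congrArg (fun σ : F ⟶ cokernel α => σ.app c y) hcomm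
      simpa using h0
    have hv'eq : ∀ (c : Cᵒᵖ) g,
        v'.app c ((cokernel.π α).app c g) = (cokernel.π β).app c (π.app c g) := by
      intro c g
      have hcomm : cokernel.π α ≫ v' = π ≫ cokernel.π β := by
        rw [hv'def]; simp
      have h0 := congrArg (fun σ : G ⟶ cokernel β => σ.app c g) hcomm
      simpa using h0
    have hπκsurj : ∀ c, Function.Surjective ⇑((cokernel.π κ).app c) := fun c => ptSurj _ c
    have hπαsurj : ∀ c, Function.Surjective ⇑((cokernel.π α).app c) := fun c => ptSurj _ c
    have hπβsurj : ∀ c, Function.Surjective ⇑((cokernel.π β).app c) := fun c => ptSurj _ c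
    have hexα : ∀ c, Function.Exact ⇑(α.app c) ⇑((cokernel.π α).app c) :=
      fun c => ptExact_cokernel α c
    have hexβ : ∀ c, Function.Exact ⇑(β.app c) ⇑((cokernel.π β).app c) :=
      fun c => ptExact_cokernel β c
    have hβel : ∀ (c : Cᵒᵖ) a, β.app c a = π.app c (α.app c a) := by
      intro c a
      have h0 := congrArg (fun σ : A ⟶ H => σ.app c a) hβdef
      simpa using h0
    refine hext u' v' ?_ ?_ ?_ hCκ hCβ
    · intro c
      rw [injective_iff_map_eq_zero]
      intro x hx
      obtain ⟨y, rfl⟩ := hπκsurj c x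
      have h1 : (cokernel.π α).app c (ι.app c y) = 0 := by rw [← hu'eq]; exact hx
      obtain ⟨a, ha⟩ := (hexα c _).mp h1
      have hβa : β.app c a = 0 := by
        rw [hβel, ha]
        exact (hexact c).apply_apply_eq_zero y
      obtain ⟨t, ht⟩ := (hkex c a).mp hβa
      have hy : κ.app c t = y := by
        apply hinj c
        rw [hκel, ht, ha]
      rw [← hy]
      exact (ptExact_cokernel κ c).apply_apply_eq_zero t
    · intro c x
      constructor
      · intro hx
        obtain ⟨g, rfl⟩ := hπαsurj c x
        have h1 : (cokernel.π β).app c (π.app c g) = 0 := by rw [← hv'eq]; exact hx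
        obtain ⟨a, ha⟩ := (hexβ c _).mp h1
        have h2 : π.app c (g - α.app c a) = 0 := by
          rw [map_sub, ← hβel, ha, sub_self]
        obtain ⟨y, hy⟩ := (hexact c _).mp h2
        refine ⟨(cokernel.π κ).app c y, ?_⟩
        rw [hu'eq, hy, map_sub]
        have h3 : (cokernel.π α).app c (α.app c a) = 0 :=
          (hexα c).apply_apply_eq_zero a
        rw [h3, sub_zero]
      · rintro ⟨w, rfl⟩
        obtain ⟨y, rfl⟩ := hπκsurj c w
        rw [hu'eq, hv'eq, (hexact c).apply_apply_eq_zero y, map_zero]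
    · intro c x
      obtain ⟨h1, rfl⟩ := hπβsurj c x
      obtain ⟨g, rfl⟩ := hsurj c h1
      exact ⟨(cokernel.π α).app c g, hv'eq c g⟩
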